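/- For every natural number n ≥ 1, every monomial k^α·b^β·X^γ·Y^δ occurring in the support of G n satisfies: γ is odd, δ = 2^n − γ, and β = 2^{n−1} − (γ+1)/2. (That is, G n has the form Y·∑_{j=1}^{2^{n−1}} d_j·X^{2j−1}·Y^{2^n − 2j}·b^{2^{n−1} − j} with d_j ∈ ℤ[k].) -/

import Mathlib

open MvPolynomial

/-- The pair `(Fₙ, Gₙ)` in `ℤ[k, b, X, Y]` (variables `0 ↦ k`, `1 ↦ b`, `2 ↦ X`, `3 ↦ Y`),
defined by `F 1 = k (X² + b Y²)`, `G 1 = X Y`,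
`F (n+1) = k ((F n)² + b (G n)²)`, `G (n+1) = (F n) (G n)`. -/
noncomputable def FG : ℕ → MvPolynomial (Fin 4) ℤ × MvPolynomial (Fin 4) ℤ
  | 0 => (0, 0)
  | 1 => (X 0 * (X 2 ^ 2 + X 1 * X 3 ^ 2), X 2 * X 3)
  | n + 2 =>
      (X 0 * ((FG (n + 1)).1 ^ 2 + X 1 * (FG (n + 1)).2 ^ 2),
        (FG (n + 1)).1 * (FG (n + 1)).2)

noncomputable def F (n : ℕ) : MvPolynomial (Fin 4) ℤ := (FG n).1
noncomputable def G (n : ℕ) : MvPolynomial (Fin 4) ℤ := (FG n).2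

lemma mem_support_mul {p q : MvPolynomial (Fin 4) ℤ} {m} (h : m ∈ (p * q).support) :
    ∃ a ∈ p.support, ∃ b ∈ q.support, m = a + b := by
  have := MvPolynomial.support_mul p q h
  rw [Finset.mem_add] at this
  obtain ⟨a, ha, b, hb, hab⟩ := this
  exact ⟨a, ha, b, hb, hab.symm⟩

lemma mem_support_sq {p : MvPolynomial (Fin 4) ℤ} {m} (h : m ∈ (p ^ 2).support) :
    ∃ a ∈ p.support, ∃ b ∈ p.support, m = a + b := by
  rw [sq] at h; exact mem_support_mul h

lemma FG_key (n : ℕ) (hn : 1 ≤ n) :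
    (∀ m ∈ (F n).support, m 2 % 2 = 0 ∧ m 2 + m 3 = 2 ^ n ∧ 2 * m 1 + m 2 = 2 ^ n) ∧
    (∀ m ∈ (G n).support, m 2 % 2 = 1 ∧ m 2 + m 3 = 2 ^ n ∧ 2 * m 1 + m 2 + 1 = 2 ^ n) := by
  induction n, hn using Nat.le_induction with
  | base =>
    constructor
    · intro m hm
      rw [show F 1 = X 0 * (X 2 ^ 2 + X 1 * X 3 ^ 2) from rfl] at hm
      obtain ⟨a, ha, b, hb, rfl⟩ := mem_support_mul hm
      rw [support_X, Finset.mem_singleton] at ha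
      subst ha
      have := MvPolynomial.support_add hb
      rw [Finset.mem_union] at this
      rcases this with h | h
      · rw [support_X_pow, Finset.mem_singleton] at h
        subst h
        simp [Finsupp.single_apply]
      · obtain ⟨c, hc, d, hd, rfl⟩ := mem_support_mul h
        rw [support_X, Finset.mem_singleton] at hc
        rw [support_X_pow, Finset.mem_singleton] at hd
        subst hc; subst hd
        simp [Finsupp.single_apply]
    · intro m hm
      rw [show G 1 = X 2 * X 3 from rfl] at hm
      obtain ⟨a, ha, b, hb, rfl⟩ := mem_support_mul hm
      rw [support_X, Finset.mem_singleton] at ha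
      rw [support_X, Finset.mem_singleton] at hb
      subst ha; subst hb
      simp [Finsupp.single_apply]
  | succ n hn ih =>
    obtain ⟨k, rfl⟩ : ∃ k, n = k + 1 := ⟨n - 1, (Nat.succ_pred_eq_of_pos hn).symm⟩
    obtain ⟨ihF, ihG⟩ := ih
    constructor
    · intro m hm
      rw [show F (k + 2) = X 0 * (F (k + 1) ^ 2 + X 1 * G (k + 1) ^ 2) from rfl] at hm
      obtain ⟨a, ha, b, hb, rfl⟩ := mem_support_mul hm
      rw [support_X, Finset.mem_singleton] at ha
      subst ha
      have := MvPolynomial.support_add hb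
      rw [Finset.mem_union] at this
      rcases this with h | h
      · obtain ⟨c, hc, d, hd, rfl⟩ := mem_support_sq h
        obtain ⟨h1, h2, h3⟩ := ihF c hc
        obtain ⟨h4, h5, h6⟩ := ihF d hd
        have hp : (2:ℕ) ^ (k + 2) = 2 * 2 ^ (k + 1) := by ring
        simp only [Finsupp.add_apply, hp,
          Finsupp.single_eq_of_ne' (show (0:Fin 4) ≠ 1 by decide),
          Finsupp.single_eq_of_ne' (show (0:Fin 4) ≠ 2 by decide),
          Finsupp.single_eq_of_ne' (show (0:Fin 4) ≠ 3 by decide),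
          Finsupp.single_eq_of_ne' (show (1:Fin 4) ≠ 2 by decide),
          Finsupp.single_eq_of_ne' (show (1:Fin 4) ≠ 3 by decide),
          Finsupp.single_eq_same]
        omega
      · obtain ⟨c, hc, d, hd, rfl⟩ := mem_support_mul h
        rw [support_X, Finset.mem_singleton] at hc
        subst hc
        obtain ⟨e, he, f, hf, rfl⟩ := mem_support_sq hd
        obtain ⟨h1, h2, h3⟩ := ihG e he
        obtain ⟨h4, h5, h6⟩ := ihG f hf
        have hp : (2:ℕ) ^ (k + 2) = 2 * 2 ^ (k + 1) := by ring
        simp only [Finsupp.add_apply, hp,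
          Finsupp.single_eq_of_ne' (show (0:Fin 4) ≠ 1 by decide),
          Finsupp.single_eq_of_ne' (show (0:Fin 4) ≠ 2 by decide),
          Finsupp.single_eq_of_ne' (show (0:Fin 4) ≠ 3 by decide),
          Finsupp.single_eq_of_ne' (show (1:Fin 4) ≠ 2 by decide),
          Finsupp.single_eq_of_ne' (show (1:Fin 4) ≠ 3 by decide),
          Finsupp.single_eq_same]
        omega
    · intro m hm
      rw [show G (k + 2) = F (k + 1) * G (k + 1) from rfl] at hm
      obtain ⟨a, ha, b, hb, rfl⟩ := mem_support_mul hm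
      obtain ⟨h1, h2, h3⟩ := ihF a ha
      obtain ⟨h4, h5, h6⟩ := ihG b hb
      have hp : (2:ℕ) ^ (k + 2) = 2 * 2 ^ (k + 1) := by ring
      simp only [Finsupp.add_apply]
      omega

/-- Every monomial `k^α b^β X^γ Y^δ` in the support of `G n` has `γ` odd,
`δ = 2^n - γ` and `β = 2^(n-1) - (γ+1)/2`. -/
theorem support_G_form (n : ℕ) (hn : 1 ≤ n) :
    ∀ m ∈ (G n).support,
      Odd (m 2) ∧ m 3 = 2 ^ n - m 2 ∧ m 1 = 2 ^ (n - 1) - (m 2 + 1) / 2 := by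
  intro m hm
  obtain ⟨h1, h2, h3⟩ := (FG_key n hn).2 m hm
  have hp : 2 ^ n = 2 * 2 ^ (n - 1) := by
    rw [← pow_succ']
    congr 1
    omega
  refine ⟨Nat.odd_iff.mpr h1, ?_, ?_⟩ <;> omega
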